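/- Let (D,r) be a bijective left non-degenerate set-theoretic solution of the Yang–Baxter equation and define its square map 𝔮 : D → D by 𝔮(a) = λ_a^{-1}(a). Then r is right non-degenerate if and only if 𝔮 is bijective. -/
import Mathlib


/-- The map `r × id` acting on `D × D × D`. -/
def rFst {D : Type*} (r : D × D → D × D) : D × D × D → D × D × D :=
  fun p => ((r (p.1, p.2.1)).1, ((r (p.1, p.2.1)).2, p.2.2))

/-- The map `id × r` acting on `D × D × D`. -/
def rSnd {D : Type*} (r : D × D → D × D) : D × D × D → D × D × D :=
  fun p => (p.1, r p.2)

/-- `r` is a set-theoretic solution of the Yang--Baxter equation. -/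
def IsYBE {D : Type*} (r : D × D → D × D) : Prop :=
  rFst r ∘ rSnd r ∘ rFst r = rSnd r ∘ rFst r ∘ rSnd r

namespace YBESquareAux

variable {D : Type*}

/-- First–component equation of the Yang–Baxter relation. -/
lemma eq1 {r : D × D → D × D} (hYB : IsYBE r) {lam : D → Equiv.Perm D}
    (hlam : ∀ a b : D, (r (a, b)).1 = lam a b) (a b c : D) :
    lam (lam a b) (lam ((r (a, b)).2) c) = lam a (lam b c) := by
  have h := congrArg Prod.fst (congrFun hYB (a, b, c))
  simpa only [Function.comp, rFst, rSnd, hlam] using h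

/-- Middle–component equation of the Yang–Baxter relation. -/
lemma eq2 {r : D × D → D × D} (hYB : IsYBE r) {lam : D → Equiv.Perm D}
    (hlam : ∀ a b : D, (r (a, b)).1 = lam a b) (a b c : D) :
    (r (lam a b, lam ((r (a, b)).2) c)).2
      = lam ((r (a, lam b c)).2) ((r (b, c)).2) := by
  have h := congrArg (fun p : D × D × D => p.2.1) (congrFun hYB (a, b, c))
  simpa only [Function.comp, rFst, rSnd, hlam] using h

/-- Identity (†): `q (λ_a t) = λ_{ρ_t a} (q t)` where `q x = λ_x⁻¹ x`. -/
lemma dagger {r : D × D → D × D} (hYB : IsYBE r) {lam : D → Equiv.Perm D}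
    (hlam : ∀ a b : D, (r (a, b)).1 = lam a b) (a t : D) :
    (lam (lam a t)).symm (lam a t) = lam ((r (a, t)).2) ((lam t).symm t) := by
  have h := eq1 hYB hlam a t ((lam t).symm t)
  rw [Equiv.apply_symm_apply] at h
  exact (Equiv.symm_apply_eq _).mpr h.symm

/-- `λ_{ρ_{q a} a} = λ_{q a}` pointwise. -/
lemma lamf {r : D × D → D × D} (hYB : IsYBE r) {lam : D → Equiv.Perm D}
    (hlam : ∀ a b : D, (r (a, b)).1 = lam a b) (a x : D) :
    lam ((r (a, (lam a).symm a)).2) x = lam ((lam a).symm a) x := by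
  have h := eq1 hYB hlam a ((lam a).symm a) x
  rw [Equiv.apply_symm_apply] at h
  exact (lam a).injective h

/-- Identity (★): `q (ρ_c a) = ρ_{λ_{q a}⁻¹ c} (q a)`. -/
lemma star {r : D × D → D × D} (hYB : IsYBE r) {lam : D → Equiv.Perm D}
    (hlam : ∀ a b : D, (r (a, b)).1 = lam a b) (a c : D) :
    (lam ((r (a, c)).2)).symm ((r (a, c)).2)
      = (r ((lam a).symm a, (lam ((lam a).symm a)).symm c)).2 := by
  have h := eq2 hYB hlam a ((lam a).symm a) ((lam ((lam a).symm a)).symm c)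
  rw [lamf hYB hlam, Equiv.apply_symm_apply, Equiv.apply_symm_apply] at h
  exact (Equiv.symm_apply_eq _).mpr h

/-- The maps `ψ_c : a ↦ ρ_{λ_a⁻¹ c}(a)` are bijective whenever `r` is bijective. -/
lemma psi_bij {r : D × D → D × D} (hbij : Function.Bijective r)
    {lam : D → Equiv.Perm D} (hlam : ∀ a b : D, (r (a, b)).1 = lam a b) (c : D) :
    Function.Bijective (fun a : D => (r (a, (lam a).symm c)).2) := by
  constructor
  · intro a a' hh
    have hh' : (r (a, (lam a).symm c)).2 = (r (a', (lam a').symm c)).2 := hh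
    have h1 : r (a, (lam a).symm c) = r (a', (lam a').symm c) := by
      apply Prod.ext
      · rw [hlam, hlam, Equiv.apply_symm_apply, Equiv.apply_symm_apply]
      · exact hh'
    have h2 := hbij.injective h1
    exact congrArg Prod.fst h2
  · intro v
    obtain ⟨⟨a, b⟩, hab⟩ := hbij.surjective (c, v)
    refine ⟨a, ?_⟩
    have h1 : lam a b = c := by rw [← hlam]; rw [hab]
    have hb : b = (lam a).symm c := by rw [← h1, Equiv.symm_apply_apply]
    show (r (a, (lam a).symm c)).2 = v
    rw [← hb]
    exact congrArg Prod.snd hab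

/-- Surjectivity of the square map from (†), given enough "fixed points" of the ρ's. -/
lemma q_surj {r : D × D → D × D} (hYB : IsYBE r) {lam : D → Equiv.Perm D}
    (hlam : ∀ a b : D, (r (a, b)).1 = lam a b)
    (hfix : ∀ t : D, ∃ a : D, (r (a, t)).2 = t) :
    Function.Surjective (fun a : D => (lam a).symm a) := by
  intro t
  obtain ⟨a, ha⟩ := hfix t
  refine ⟨lam a t, ?_⟩
  have h := dagger hYB hlam a t
  rw [ha, Equiv.apply_symm_apply] at h
  exact h

/-- Backward direction: if the square map is bijective, `r` is right non-degenerate. -/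
lemma backward {r : D × D → D × D} (hYB : IsYBE r) (hbij : Function.Bijective r)
    {lam : D → Equiv.Perm D} (hlam : ∀ a b : D, (r (a, b)).1 = lam a b)
    (hq : Function.Bijective (fun a : D => (lam a).symm a)) (b : D) :
    Function.Bijective (fun a : D => (r (a, b)).2) := by
  have hψ := psi_bij hbij hlam b
  constructor
  · intro a a' h
    have h' : (r (a, b)).2 = (r (a', b)).2 := h
    have h2 : (lam ((r (a, b)).2)).symm ((r (a, b)).2)
        = (lam ((r (a', b)).2)).symm ((r (a', b)).2) := by rw [h']
    rw [star hYB hlam a b, star hYB hlam a' b] at h2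
    have h3 : (lam a).symm a = (lam a').symm a' := hψ.injective h2
    exact hq.injective h3
  · intro v
    obtain ⟨s, hs⟩ := hψ.surjective ((lam v).symm v)
    obtain ⟨a, ha⟩ := hq.surjective s
    have ha' : (lam a).symm a = s := ha
    refine ⟨a, ?_⟩
    have h2 : (lam ((r (a, b)).2)).symm ((r (a, b)).2) = (lam v).symm v := by
      rw [star hYB hlam a b, ha']
      exact hs
    exact hq.injective h2

section Forward

variable {r : D × D → D × D} (hYB : IsYBE r) (hbij : Function.Bijective r)
  {lam : D → Equiv.Perm D} (hlam : ∀ a b : D, (r (a, b)).1 = lam a b)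
  (hρ : ∀ b : D, Function.Bijective (fun a : D => (r (a, b)).2))

/-- The inverse of `r` as an equivalence. -/
noncomputable def eR (hbij : Function.Bijective r) : D × D ≃ D × D :=
  Equiv.ofBijective r hbij

/-- The permutations `ρ_b` as equivalences. -/
noncomputable def rhoE (hρ : ∀ b : D, Function.Bijective (fun a : D => (r (a, b)).2))
    (b : D) : Equiv.Perm D :=
  Equiv.ofBijective _ (hρ b)

/-- The solution `r̃ = swap ∘ r⁻¹ ∘ swap`. -/
noncomputable def rT (hbij : Function.Bijective r) : D × D → D × D :=
  fun p => (((eR hbij).symm (p.2, p.1)).2, ((eR hbij).symm (p.2, p.1)).1)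

/-- The λ-maps of `r̃`, as permutations. -/
noncomputable def lamT (hbij : Function.Bijective r)
    (hlam : ∀ a b : D, (r (a, b)).1 = lam a b)
    (hρ : ∀ b : D, Function.Bijective (fun a : D => (r (a, b)).2))
    (t : D) : Equiv.Perm D where
  toFun v := ((eR hbij).symm (v, t)).2
  invFun b := lam ((rhoE hρ b).symm t) b
  left_inv v := by
    have h2 : r (((eR hbij).symm (v, t)).1, ((eR hbij).symm (v, t)).2) = (v, t) :=
      (eR hbij).apply_symm_apply (v, t)
    have h3 : (r (((eR hbij).symm (v, t)).1, ((eR hbij).symm (v, t)).2)).2 = t := by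
      rw [h2]
    have h4 : (rhoE hρ (((eR hbij).symm (v, t)).2)).symm t = ((eR hbij).symm (v, t)).1 := by
      rw [Equiv.symm_apply_eq]
      exact h3.symm
    show lam ((rhoE hρ (((eR hbij).symm (v, t)).2)).symm t) (((eR hbij).symm (v, t)).2) = v
    rw [h4, ← hlam, h2]
  right_inv b := by
    have h2 : r ((rhoE hρ b).symm t, b) = (lam ((rhoE hρ b).symm t) b, t) := by
      apply Prod.ext
      · exact hlam _ _
      · exact (rhoE hρ b).apply_symm_apply t
    have h3 : (eR hbij).symm (lam ((rhoE hρ b).symm t) b, t) = ((rhoE hρ b).symm t, b) := by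
      rw [Equiv.symm_apply_eq]
      exact h2.symm
    show ((eR hbij).symm (lam ((rhoE hρ b).symm t) b, t)).2 = b
    rw [h3]

include hYB in
lemma rT_isYBE : IsYBE (rT hbij) := by
  let eT : D × D × D → D × D × D := fun p => (p.2.2, p.2.1, p.1)
  let eA : (D × D × D) ≃ (D × D × D) :=
    (Equiv.prodAssoc D D D).symm.trans
      (((eR hbij).prodCongr (Equiv.refl D)).trans (Equiv.prodAssoc D D D))
  let eB : (D × D × D) ≃ (D × D × D) := (Equiv.refl D).prodCongr (eR hbij)
  have hEq : eA.trans (eB.trans eA) = eB.trans (eA.trans eB) :=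
    Equiv.ext fun p => congrFun hYB p
  have hE : ∀ x, eB.symm (eA.symm (eB.symm x)) = eA.symm (eB.symm (eA.symm x)) := by
    intro x
    have h := congrArg (fun E : (D × D × D) ≃ (D × D × D) => E.symm x) hEq
    exact h.symm
  show rFst (rT hbij) ∘ rSnd (rT hbij) ∘ rFst (rT hbij)
      = rSnd (rT hbij) ∘ rFst (rT hbij) ∘ rSnd (rT hbij)
  funext p
  exact congrArg eT (hE (eT p))

include hlam in
lemma rT_fix : ∀ t : D, ∃ a : D, (rT hbij (a, t)).2 = t := by
  intro t
  refine ⟨(r (t, (lam t).symm t)).2, ?_⟩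
  have h1 : r (t, (lam t).symm t) = (t, (r (t, (lam t).symm t)).2) := by
    apply Prod.ext
    · rw [hlam, Equiv.apply_symm_apply]
    · rfl
  have h2 : (eR hbij).symm (t, (r (t, (lam t).symm t)).2) = (t, (lam t).symm t) := by
    rw [Equiv.symm_apply_eq]
    exact h1.symm
  show ((eR hbij).symm (t, (r (t, (lam t).symm t)).2)).1 = t
  rw [h2]

include hYB hbij hlam hρ in
/-- Forward direction: right non-degeneracy implies the square map is bijective. -/
lemma forward : Function.Bijective (fun a : D => (lam a).symm a) := by
  -- the candidate inverse of the square map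
  set h : D → D := fun t => lam ((rhoE hρ t).symm t) t with hh
  have hqh : ∀ t : D, (lam (h t)).symm (h t) = t := by
    intro t
    have hd := dagger hYB hlam ((rhoE hρ t).symm t) t
    have h2 : (r ((rhoE hρ t).symm t, t)).2 = t := (rhoE hρ t).apply_symm_apply t
    rw [h2, Equiv.apply_symm_apply] at hd
    exact hd
  have hlamT : ∀ a b : D, (rT hbij (a, b)).1 = lamT hbij hlam hρ a b := fun _ _ => rfl
  have hsurjT := q_surj (rT_isYBE hYB hbij) hlamT (rT_fix hbij hlam)
  have hsurj_h : Function.Surjective h := by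
    intro x
    obtain ⟨u, hu⟩ := hsurjT x
    exact ⟨u, hu⟩
  constructor
  · intro x y hxy
    obtain ⟨s, hs⟩ := hsurj_h x
    obtain ⟨s', hs'⟩ := hsurj_h y
    have hxy' : (lam x).symm x = (lam y).symm y := hxy
    rw [← hs, ← hs', hqh s, hqh s'] at hxy'
    rw [← hs, ← hs', hxy']
  · exact fun t => ⟨h t, hqh t⟩

end Forward

end YBESquareAux

/-- Let `(D, r)` be a bijective left non-degenerate solution of the
Yang--Baxter equation, with `λ_a = r(a, -).1` bijective (encoded by the permutations `lam a`),
and let `𝔮(a) = λ_a⁻¹(a)` be its square map. Then `r` is right non-degenerate if and only if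
`𝔮` is bijective. -/
theorem rightNonDegenerate_iff_squareMap_bijective {D : Type*}
    (r : D × D → D × D) (hYB : IsYBE r) (hbij : Function.Bijective r)
    (lam : D → Equiv.Perm D) (hlam : ∀ a b : D, (r (a, b)).1 = lam a b) :
    (∀ b : D, Function.Bijective (fun a : D => (r (a, b)).2)) ↔
      Function.Bijective (fun a : D => (lam a)⁻¹ a) := by
  have hconv : (fun a : D => (lam a)⁻¹ a) = fun a : D => (lam a).symm a := rfl
  rw [hconv]
  constructor
  · intro hρ
    exact YBESquareAux.forward hYB hbij hlam hρ
  · intro hq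
    exact fun b => YBESquareAux.backward hYB hbij hlam hq b
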